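/- The partial derivatives of the cost C(μ, σ) for the location-scale model satisfy (1/2) ∂C/∂μ = μ − (1/n) Σ xᵢ and (1/2) ∂C/∂σ = σ − Σ kᵢ xᵢ, with kᵢ = ∫_{z_{i−1}}^{z_i} z f(z) dz independent of μ and σ. -/

import Mathlib

open MeasureTheory

/-- The `i`-th cell (for `1 ≤ i ≤ n`) of the partition of `ℝ` determined by interior points
`z 1 < ⋯ < z (n-1)`, with `z 0 = -∞` and `z n = ∞`. -/
def partitionCell (n : ℕ) (z : ℕ → ℝ) (i : ℕ) : Set ℝ :=
  if i = 1 then Set.Iic (z 1)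
  else if i = n then Set.Ioi (z (n - 1))
  else Set.Ioc (z (i - 1)) (z i)

/-- The partial derivatives of
`C(μ, σ) = μ² + σ² + (1/n) Σ xᵢ² - 2 Σᵢ xᵢ ∫_{z_{i-1}}^{z_i} (σz + μ) f(z) dz`
satisfy `(1/2) ∂C/∂μ = μ - (1/n) Σ xᵢ` and `(1/2) ∂C/∂σ = σ - Σ kᵢ xᵢ`, where
`kᵢ = ∫_{z_{i-1}}^{z_i} z f(z) dz` does not depend on `μ`, `σ`. -/
theorem cost_partial_derivs (n : ℕ) (hn : 1 < n) (f : ℝ → ℝ) (z x : ℕ → ℝ)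
    (hf_nonneg : ∀ t, 0 ≤ f t)
    (hf_int : Integrable f)
    (hf_prob : ∫ t, f t = 1)
    (hf_mean : ∫ t, t * f t = 0)
    (hf_var : ∫ t, t ^ 2 * f t = 1)
    (hf_m1 : Integrable (fun t => t * f t))
    (hz_mono : StrictMonoOn z (Set.Icc 1 (n - 1)))
    (hz_prob : ∀ i ∈ Finset.Icc 1 n, (∫ t in partitionCell n z i, f t) = 1 / n)
    (k : ℕ → ℝ) (hk : ∀ i ∈ Finset.Icc 1 n, k i = ∫ t in partitionCell n z i, t * f t)
    (C : ℝ → ℝ → ℝ)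
    (hC : ∀ μ σ, C μ σ = μ ^ 2 + σ ^ 2 + (1 / n) * ∑ i ∈ Finset.Icc 1 n, (x i) ^ 2
      - 2 * ∑ i ∈ Finset.Icc 1 n, x i * ∫ t in partitionCell n z i, (σ * t + μ) * f t) :
    ∀ μ σ : ℝ,
      HasDerivAt (fun m => C m σ)
        (2 * (μ - (1 / n) * ∑ i ∈ Finset.Icc 1 n, x i)) μ ∧
      HasDerivAt (fun s => C μ s)
        (2 * (σ - ∑ i ∈ Finset.Icc 1 n, k i * x i)) σ := by
  intro μ σ
  set S := ∑ i ∈ Finset.Icc 1 n, x i with hS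
  set T := ∑ i ∈ Finset.Icc 1 n, x i * k i with hT
  set A := (1 / (n:ℝ)) * ∑ i ∈ Finset.Icc 1 n, (x i) ^ 2 with hA
  have key : ∀ μ' σ' : ℝ, C μ' σ' = μ' ^ 2 + σ' ^ 2 + A - 2 * (σ' * T + μ' * (S / n)) := by
    intro μ' σ'
    rw [hC]
    have hsum : ∑ i ∈ Finset.Icc 1 n, x i * ∫ t in partitionCell n z i, (σ' * t + μ') * f t
        = ∑ i ∈ Finset.Icc 1 n, (σ' * (x i * k i) + μ' * (x i * (1 / n))) := by
      refine Finset.sum_congr rfl fun i hi => ?_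
      have hint : (∫ t in partitionCell n z i, (σ' * t + μ') * f t)
          = σ' * (∫ t in partitionCell n z i, t * f t) + μ' * ∫ t in partitionCell n z i, f t := by
        have h1 : Integrable (fun t => σ' * (t * f t))
            (volume.restrict (partitionCell n z i)) := (hf_m1.restrict.const_mul σ')
        have h2 : Integrable (fun t => μ' * f t)
            (volume.restrict (partitionCell n z i)) := (hf_int.restrict.const_mul μ')
        have : (fun t => (σ' * t + μ') * f t) = fun t => σ' * (t * f t) + μ' * f t := by
          funext t; ring
        rw [this, integral_add h1 h2, integral_const_mul, integral_const_mul]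
      rw [hint, hz_prob i hi, ← hk i hi]; ring
    rw [hsum, Finset.sum_add_distrib, ← Finset.mul_sum, ← Finset.mul_sum, ← hT, ← Finset.sum_mul, ← hS]
    ring
  constructor
  · have h : (fun m => C m σ) = fun m => m ^ 2 + σ ^ 2 + A - 2 * (σ * T + m * (S / n)) :=
      funext fun m => key m σ
    rw [h]
    have h1 : HasDerivAt (fun m : ℝ => m ^ 2 + σ ^ 2 + A) (2 * μ) μ := by
      simpa using ((hasDerivAt_pow 2 μ).add_const (σ ^ 2)).add_const A
    have h2 : HasDerivAt (fun m : ℝ => 2 * (σ * T + m * (S / n))) (2 * (S / n)) μ := by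
      simpa using (((hasDerivAt_id μ).mul_const (S / n)).const_add (σ * T)).const_mul 2
    have := h1.sub h2
    refine this.congr_deriv ?_
    field_simp
  · have h : (fun s => C μ s) = fun s => μ ^ 2 + s ^ 2 + A - 2 * (s * T + μ * (S / n)) :=
      funext fun s => key μ s
    rw [h]
    have h1 : HasDerivAt (fun s : ℝ => μ ^ 2 + s ^ 2 + A) (2 * σ) σ := by
      have := ((hasDerivAt_pow 2 σ).const_add (μ ^ 2)).add_const A
      simpa using this
    have h2 : HasDerivAt (fun s : ℝ => 2 * (s * T + μ * (S / n))) (2 * T) σ := by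
      simpa using (((hasDerivAt_id σ).mul_const T).add_const (μ * (S / n))).const_mul 2
    have := h1.sub h2
    refine this.congr_deriv ?_
    have : ∑ i ∈ Finset.Icc 1 n, k i * x i = T := by
      rw [hT]; exact Finset.sum_congr rfl fun i _ => mul_comm _ _
    rw [this]; ring
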